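/- A polynomial p ∈ F[x, y] vanishes at every point of the Hermitian curve if and only if p lies in the ideal of F[x, y] generated by x^{q²} − x and y^q + y − x^{q+1}. -/

import Mathlib

open MvPolynomial

open Polynomial in
lemma herm_root_bound {F : Type} [Field F] [Fintype F] [DecidableEq F] (P : Polynomial F)
    (hP : P ≠ 0) :
    (Finset.univ.filter (fun a : F => P.eval a = 0)).card ≤ P.natDegree := by
  calc (Finset.univ.filter (fun a : F => P.eval a = 0)).card
      ≤ P.roots.toFinset.card := by
        apply Finset.card_le_card
        intro a ha
        simp only [Finset.mem_filter] at ha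
        rw [Multiset.mem_toFinset, mem_roots hP]
        exact ha.2
    _ ≤ Multiset.card P.roots := P.roots.toFinset_card_le
    _ ≤ P.natDegree := P.card_roots'

open Polynomial in
lemma herm_dvd {F : Type} [Field F] [Fintype F] [DecidableEq F] (c : Polynomial F)
    (h : ∀ α : F, c.eval α = 0) :
    (Polynomial.X ^ (Fintype.card F) - Polynomial.X : Polynomial F) ∣ c := by
  rcases eq_or_ne c 0 with rfl | hc
  · exact dvd_zero _
  have hcard : 1 < Fintype.card F := Fintype.one_lt_card
  have hmon : Monic (Polynomial.X ^ (Fintype.card F) - Polynomial.X : Polynomial F) := by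
    apply monic_X_pow_sub
    rw [degree_X]
    exact_mod_cast hcard
  have hnd : (Polynomial.X ^ (Fintype.card F) - Polynomial.X : Polynomial F).natDegree = Fintype.card F :=
    FiniteField.X_pow_card_sub_X_natDegree_eq F hcard
  have hroots : (Polynomial.X ^ (Fintype.card F) - Polynomial.X : Polynomial F).roots = Finset.univ.val :=
    FiniteField.roots_X_pow_card_sub_X F
  have hfact : (Polynomial.X ^ (Fintype.card F) - Polynomial.X : Polynomial F)
      = (Finset.univ.val.map (fun a : F => Polynomial.X - Polynomial.C a)).prod := by
    have := C_leadingCoeff_mul_prod_multiset_X_sub_C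
      (p := (Polynomial.X ^ (Fintype.card F) - Polynomial.X : Polynomial F))
      (by rw [hroots, hnd]; simp)
    rw [hroots, hmon.leadingCoeff, map_one, one_mul] at this
    exact this.symm
  have hle : (Finset.univ.val : Multiset F) ≤ c.roots := by
    rw [Multiset.le_iff_subset Finset.univ.nodup]
    intro a _
    rw [mem_roots hc]
    exact h a
  rw [hfact]
  exact (Multiset.prod_dvd_prod_of_le (Multiset.map_le_map hle)).trans
    c.prod_multiset_X_sub_C_dvd

open Polynomial in
lemma herm_fiber (p e q : ℕ) (hp : p.Prime) (he : 0 < e) (hq : q = p ^ e)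
    {F : Type} [Field F] [Fintype F] [DecidableEq F] (hF : Fintype.card F = q ^ 2)
    (t : F) (ht : t ^ q = t) :
    q ≤ (Finset.univ.filter (fun β : F => β ^ q + β = t)).card := by
  haveI := Fact.mk hp
  have hq2 : 2 ≤ q := by rw [hq]; exact Nat.one_lt_pow he.ne' hp.one_lt
  obtain ⟨n, hrp, hcard⟩ := FiniteField.card F (ringChar F)
  haveI : CharP F p := by
    have : ringChar F = p := by
      have hdvd : ringChar F ∣ p ^ (e * 2) := by
        have h0 : ringChar F ∣ Fintype.card F := hcard ▸ dvd_pow_self _ n.pos.ne'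
        rwa [hF, hq, ← pow_mul] at h0
      exact ((Nat.Prime.eq_one_or_self_of_dvd hp _
        (hrp.dvd_of_dvd_pow hdvd)).resolve_left hrp.one_lt.ne').symm ▸ rfl
    exact this ▸ ringChar.charP F
  have hadd : ∀ x y : F, (x + y) ^ q = x ^ q + y ^ q := by
    intro x y; rw [hq]; exact add_pow_char_pow x y p e
  have himg : ∀ β : F, (β ^ q + β) ^ q = β ^ q + β := by
    intro β
    have hββ : β ^ (q ^ 2) = β := by rw [← hF]; exact FiniteField.pow_card β
    rw [hadd, ← pow_mul, ← pow_two, hββ, add_comm]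
  classical
  set S : Finset F := Finset.univ.filter (fun c : F => c ^ q = c) with hS
  have htS : t ∈ S := by simp [hS, ht]
  have hScard : S.card ≤ q := by
    have h1q : 1 < q := hq2
    have := herm_root_bound (F := F) (Polynomial.X ^ q - Polynomial.X) (FiniteField.X_pow_card_sub_X_ne_zero F h1q)
    rw [FiniteField.X_pow_card_sub_X_natDegree_eq F h1q] at this
    refine le_trans (le_of_eq ?_) this
    congr 1
    ext a
    simp [hS, sub_eq_zero]
  have hfib : ∀ c : F, (Finset.univ.filter (fun β : F => β ^ q + β = c)).card ≤ q := by
    intro c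
    have hmon : Monic (Polynomial.X ^ q + Polynomial.X - Polynomial.C c : Polynomial F) := by
      rw [sub_eq_add_neg, add_assoc]
      apply monic_X_pow_add
      refine lt_of_le_of_lt (degree_add_le _ _) ?_
      rw [degree_X, degree_neg]
      refine max_lt ?_ ?_
      · exact_mod_cast hq2
      · exact lt_of_le_of_lt (degree_C_le) (by exact_mod_cast Nat.lt_of_lt_of_le Nat.zero_lt_two hq2)
    have hnd : (Polynomial.X ^ q + Polynomial.X - Polynomial.C c : Polynomial F).natDegree = q := by
      have : (Polynomial.X ^ q + Polynomial.X - Polynomial.C c : Polynomial F).degree = q := by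
        rw [sub_eq_add_neg, add_assoc]
        rw [degree_add_eq_left_of_degree_lt, degree_X_pow]
        rw [degree_X_pow]
        refine lt_of_le_of_lt (degree_add_le _ _) ?_
        rw [degree_X, degree_neg]
        refine max_lt ?_ ?_
        · exact_mod_cast hq2
        · exact lt_of_le_of_lt (degree_C_le) (by exact_mod_cast Nat.lt_of_lt_of_le Nat.zero_lt_two hq2)
      exact natDegree_eq_of_degree_eq_some this
    have := herm_root_bound (F := F) (Polynomial.X ^ q + Polynomial.X - Polynomial.C c) hmon.ne_zero
    rw [hnd] at this
    refine le_trans (le_of_eq ?_) this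
    congr 1
    ext a
    simp [sub_eq_zero]
  have hsum : Fintype.card F = ∑ c ∈ S, (Finset.univ.filter (fun β : F => β ^ q + β = c)).card := by
    rw [← Finset.card_univ]
    apply Finset.card_eq_sum_card_fiberwise
    intro β _
    simp [hS, himg β]
  set fib := fun c : F => (Finset.univ.filter (fun β : F => β ^ q + β = c)).card with hfibdef
  have hsplit : ∑ c ∈ S, fib c = fib t + ∑ c ∈ S.erase t, fib c :=
    (Finset.add_sum_erase S fib htS).symm
  have herase : ∑ c ∈ S.erase t, fib c ≤ (q - 1) * q := by
    calc ∑ c ∈ S.erase t, fib c ≤ ∑ _c ∈ S.erase t, q := Finset.sum_le_sum (fun c _ => hfib c)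
      _ = (S.card - 1) * q := by rw [Finset.sum_const, Finset.card_erase_of_mem htS, smul_eq_mul]
      _ ≤ (q - 1) * q := Nat.mul_le_mul_right _ (Nat.sub_le_sub_right hScard 1)
  have htot : q * q = fib t + ∑ c ∈ S.erase t, fib c := by
    rw [← sq, ← hF, hsum]
    exact hsplit
  have hqq : (q - 1) * q + q = q * q := by
    have h1 : q - 1 + 1 = q := Nat.succ_pred_eq_of_pos (lt_of_lt_of_le Nat.zero_lt_two hq2)
    calc (q - 1) * q + q = (q - 1 + 1) * q := by ring
      _ = q * q := by rw [h1]
  have hfin : q + (q - 1) * q ≤ fib t + (q - 1) * q := by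
    calc q + (q - 1) * q = q * q := by rw [add_comm]; exact hqq
      _ = fib t + ∑ c ∈ S.erase t, fib c := htot
      _ ≤ fib t + (q - 1) * q := Nat.add_le_add_left herase _
  exact Nat.le_of_add_le_add_right hfin

noncomputable def psiF (F : Type) [Field F] : MvPolynomial (Fin 1) F ≃ₐ[F] Polynomial F :=
  (MvPolynomial.finSuccEquiv F 0).trans
    (Polynomial.mapAlgEquiv (MvPolynomial.isEmptyAlgEquiv F (Fin 0)))

noncomputable def TT (F : Type) [Field F] :
    MvPolynomial (Fin 2) F ≃ₐ[F] Polynomial (Polynomial F) :=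
  (MvPolynomial.renameEquiv F (Equiv.swap (0 : Fin 2) 1)).trans
    ((MvPolynomial.finSuccEquiv F 1).trans (Polynomial.mapAlgEquiv (psiF F)))

lemma psiF_X (F : Type) [Field F] : psiF F (X 0) = Polynomial.X := by
  simp [psiF, finSuccEquiv_X_zero]

lemma TT_X0 (F : Type) [Field F] : TT F (X 0) = Polynomial.C Polynomial.X := by
  have h1 : (Equiv.swap (0 : Fin 2) 1) 0 = 1 := Equiv.swap_apply_left 0 1
  have h2 : (1 : Fin 2) = Fin.succ 0 := rfl
  rw [TT, AlgEquiv.trans_apply, AlgEquiv.trans_apply, renameEquiv_apply, rename_X, h1, h2,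
    finSuccEquiv_X_succ, Polynomial.coe_mapAlgEquiv, Polynomial.map_C]
  simp [psiF_X]

lemma TT_X1 (F : Type) [Field F] : TT F (X 1) = Polynomial.X := by
  have h1 : (Equiv.swap (0 : Fin 2) 1) 1 = 0 := Equiv.swap_apply_right 0 1
  rw [TT, AlgEquiv.trans_apply, AlgEquiv.trans_apply, renameEquiv_apply, rename_X, h1,
    finSuccEquiv_X_zero, Polynomial.coe_mapAlgEquiv, Polynomial.map_X]

lemma TT_eval (F : Type) [Field F] (α β : F) (g : MvPolynomial (Fin 2) F) :
    MvPolynomial.eval ![α, β] g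
      = Polynomial.eval β ((TT F g).map (Polynomial.evalRingHom α)) := by
  have key : (MvPolynomial.eval ![α, β] : MvPolynomial (Fin 2) F →+* F)
      = (Polynomial.evalRingHom β).comp ((Polynomial.mapRingHom (Polynomial.evalRingHom α)).comp
        (TT F : MvPolynomial (Fin 2) F →+* Polynomial (Polynomial F))) := by
    apply MvPolynomial.ringHom_ext
    · intro r
      have hc : TT F (C r) = Polynomial.C (Polynomial.C r) := by
        have : (C r : MvPolynomial (Fin 2) F) = algebraMap F _ r := rfl
        rw [this, AlgEquiv.commutes]
        simp [Polynomial.algebraMap_apply, MvPolynomial.algebraMap_eq]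
      simp [hc]
    · intro i
      fin_cases i
      · simp [TT_X0]
      · simp [TT_X1]
  exact RingHom.congr_fun key g

/-- Let `F` be the field with `q²` elements, `q = p^e`. A polynomial `f ∈ F[x, y]` vanishes
at every point of the Hermitian curve `β^q + β = α^(q+1)` if and only if `f` lies in the
ideal generated by `x^(q²) - x` and `y^q + y - x^(q+1)`. -/
theorem stmt_8 (p e : ℕ) (hp : p.Prime) (he : 0 < e) (q : ℕ) (hq : q = p ^ e)
    (F : Type) [Field F] [Fintype F] (hF : Fintype.card F = q ^ 2)
    (f : MvPolynomial (Fin 2) F) :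
    (∀ α β : F, β ^ q + β = α ^ (q + 1) → MvPolynomial.eval ![α, β] f = 0) ↔
      f ∈ Ideal.span {(X 0 : MvPolynomial (Fin 2) F) ^ (q ^ 2) - X 0,
        (X 1 : MvPolynomial (Fin 2) F) ^ q + X 1 - (X 0) ^ (q + 1)} := by
  classical
  have hq2 : 2 ≤ q := by rw [hq]; exact Nat.one_lt_pow he.ne' hp.one_lt
  set A : MvPolynomial (Fin 2) F := (X 0) ^ (q ^ 2) - X 0 with hA
  set B : MvPolynomial (Fin 2) F := (X 1) ^ q + X 1 - (X 0) ^ (q + 1) with hB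
  have hTA : TT F A = Polynomial.C ((Polynomial.X : Polynomial F) ^ (q ^ 2) - Polynomial.X) := by
    rw [hA, map_sub, map_pow, TT_X0, ← Polynomial.C_pow, ← map_sub]
  have hTB : TT F B
      = Polynomial.X ^ q + Polynomial.X
        - Polynomial.C ((Polynomial.X : Polynomial F) ^ (q + 1)) := by
    rw [hB, map_sub, map_add, map_pow, map_pow, TT_X0, TT_X1, ← Polynomial.C_pow]
  have hαc : ∀ α : F, α ^ (q ^ 2) = α := fun α => by rw [← hF]; exact FiniteField.pow_card α
  constructor
  · intro hvan
    set Bp : Polynomial (Polynomial F) :=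
      Polynomial.X ^ q + Polynomial.X - Polynomial.C ((Polynomial.X : Polynomial F) ^ (q + 1))
      with hBp
    have hdlt : ((Polynomial.X : Polynomial (Polynomial F))
        - Polynomial.C ((Polynomial.X : Polynomial F) ^ (q + 1))).degree < (q : ℕ) := by
      refine lt_of_le_of_lt (Polynomial.degree_sub_le _ _) (max_lt ?_ ?_)
      · rw [Polynomial.degree_X]; exact_mod_cast hq2
      · exact lt_of_le_of_lt Polynomial.degree_C_le
          (by exact_mod_cast lt_of_lt_of_le Nat.zero_lt_two hq2)
    have hBp' : Bp = Polynomial.X ^ q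
        + (Polynomial.X - Polynomial.C ((Polynomial.X : Polynomial F) ^ (q + 1))) := by
      rw [hBp]; ring
    have hmon : Bp.Monic := by
      rw [hBp']
      exact Polynomial.monic_X_pow_add hdlt
    have hdegBp : Bp.degree = (q : ℕ) := by
      rw [hBp', Polynomial.degree_add_eq_left_of_degree_lt, Polynomial.degree_X_pow]
      rw [Polynomial.degree_X_pow]
      exact hdlt
    set P : Polynomial (Polynomial F) := TT F f with hP
    set r : Polynomial (Polynomial F) := P %ₘ Bp with hr
    have hsumPD : r + Bp * (P /ₘ Bp) = P := P.modByMonic_add_div Bp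
    have hvr : ∀ α β : F, β ^ q + β = α ^ (q + 1) →
        Polynomial.eval β (r.map (Polynomial.evalRingHom α)) = 0 := by
      intro α β hcurve
      have h1 : Polynomial.eval β (P.map (Polynomial.evalRingHom α)) = 0 := by
        rw [hP, ← TT_eval]; exact hvan α β hcurve
      have h2 : Polynomial.eval β (Bp.map (Polynomial.evalRingHom α)) = 0 := by
        rw [hBp]
        simp only [Polynomial.map_sub, Polynomial.map_add, Polynomial.map_pow,
          Polynomial.map_X, Polynomial.map_C, Polynomial.eval_sub, Polynomial.eval_add,
          Polynomial.eval_pow, Polynomial.eval_X, Polynomial.eval_C, Polynomial.coe_evalRingHom]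
        rw [hcurve, sub_self]
      have h3 := congrArg (fun g : Polynomial (Polynomial F) =>
        Polynomial.eval β (g.map (Polynomial.evalRingHom α))) hsumPD
      simp only [Polynomial.map_add, Polynomial.map_mul, Polynomial.eval_add,
        Polynomial.eval_mul, h2, zero_mul, add_zero] at h3
      rw [h3, h1]
    have hrdeg : r.degree < (q : ℕ) := by
      rw [hr, ← hdegBp]
      exact Polynomial.degree_modByMonic_lt P hmon
    have hrcoeff : ∀ j, ((Polynomial.X : Polynomial F) ^ (q ^ 2) - Polynomial.X) ∣ r.coeff j := by
      intro j
      have hzero : ∀ α : F, (r.coeff j).eval α = 0 := by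
        intro α
        have hrα : r.map (Polynomial.evalRingHom α) = 0 := by
          rcases eq_or_ne r 0 with h0 | h0
          · rw [h0, Polynomial.map_zero]
          apply Polynomial.eq_zero_of_natDegree_lt_card_of_eval_eq_zero' _
            (Finset.univ.filter (fun β : F => β ^ q + β = α ^ (q + 1)))
          · intro β hβ
            rw [Finset.mem_filter] at hβ
            exact hvr α β hβ.2
          · have h3 : (r.map (Polynomial.evalRingHom α)).natDegree < q :=
              lt_of_le_of_lt Polynomial.natDegree_map_le
                ((Polynomial.natDegree_lt_iff_degree_lt h0).mpr hrdeg)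
            refine lt_of_lt_of_le h3 (herm_fiber p e q hp he hq hF _ ?_)
            calc (α ^ (q + 1)) ^ q = α ^ ((q + 1) * q) := by rw [← pow_mul]
              _ = α ^ (q ^ 2) * α ^ q := by rw [← pow_add]; congr 1; ring
              _ = α ^ (q + 1) := by rw [hαc α, ← pow_succ']
        have h4 := congrArg (fun g : Polynomial F => g.coeff j) hrα
        simpa [Polynomial.coeff_map] using h4
      have h5 := herm_dvd (r.coeff j) hzero
      rwa [hF] at h5
    obtain ⟨D, hD⟩ := (Polynomial.C_dvd_iff_dvd_coeff
      ((Polynomial.X : Polynomial F) ^ (q ^ 2) - Polynomial.X) r).mpr hrcoeff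
    rw [Ideal.mem_span_pair]
    refine ⟨(TT F).symm D, (TT F).symm (P /ₘ Bp), ?_⟩
    apply (TT F).injective
    rw [map_add, map_mul, map_mul, AlgEquiv.apply_symm_apply, AlgEquiv.apply_symm_apply,
      hTA, hTB, ← hP]
    linear_combination hsumPD - hD
  · intro hmem α β hcurve
    rw [Ideal.mem_span_pair] at hmem
    obtain ⟨u, v, huv⟩ := hmem
    have h1 : MvPolynomial.eval ![α, β] A = 0 := by
      rw [hA, map_sub, map_pow, eval_X]
      simp only [Matrix.cons_val_zero]
      rw [hαc α, sub_self]
    have h2 : MvPolynomial.eval ![α, β] B = 0 := by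
      rw [hB, map_sub, map_add, map_pow, map_pow, eval_X, eval_X]
      simp only [Matrix.cons_val_zero, Matrix.cons_val_one, Matrix.head_cons]
      rw [hcurve, sub_self]
    rw [← huv, map_add, map_mul, map_mul, h1, h2]
    ring
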